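/- For any two conditions p, q ∈ ℙ₁ there exists π ∈ A₁ with p, q ∈ D_π such that πp and q are compatible in ℙ₁; moreover π can be chosen with supp π(κ⁺) = ∅ for every κ⁺ ∈ supp π (so that π acts only by flipping values). -/

import Mathlib

noncomputable section

open Classical

/-- Ordinals (in the base universe). -/
abbrev Ord0 : Type 1 := Ordinal.{0}
/-- Cardinals (in the base universe). -/
abbrev Card0 : Type 1 := Cardinal.{0}

/-- Vertices of trees: pairs (κ, i) of a cardinal (the level) and an ordinal (the index). -/
abbrev Vertex : Type 1 := Card0 × Ord0

/-- κ is a successor cardinal. -/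
def IsSuccCard (κ : Card0) : Prop := ∃ μ : Card0, Cardinal.aleph0 ≤ μ ∧ κ = Order.succ μ

/-- κ is an (infinite) limit cardinal. -/
def IsLimitCard (κ : Card0) : Prop := Cardinal.aleph0 ≤ κ ∧ ¬ IsSuccCard κ

/-- The modified function F_lim. -/
def FlimOf (F : Card0 → Card0) (κ : Card0) : Card0 :=
  if κ < Cardinal.aleph Ordinal.omega0 then F Cardinal.aleph0
  else if IsLimitCard κ then F κ
  else F (sSup {lam : Card0 | lam < κ ∧ IsLimitCard lam})

/-- A set (of objects living in `Type 1`) has cardinality < κ. -/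
def SetCardLT {α : Type 1} (S : Set α) (κ : Card0) : Prop :=
  Cardinal.mk ↥S < Cardinal.lift.{1} κ

/-- Raw data for conditions in ℙ₀: a set of vertices, a binary relation on vertices and
a valuation assigning to each vertex a partial 0-1-function on ordinals. -/
structure RawP0 : Type 1 where
  verts : Set Vertex
  le : Vertex → Vertex → Prop
  val : Vertex → Ord0 → Option Bool

/-- Domain of the partial function attached to vertex v. -/
def dom0 (p : RawP0) (v : Vertex) : Set Ord0 := {ζ | p.val v ζ ≠ none}

/-- (t, le) is an F_lim-tree. -/
def IsFlimTree (Flim : Card0 → Card0) (t : Set Vertex) (le : Vertex → Vertex → Prop) : Prop :=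
  (∀ v ∈ t, (v.1 = 0 ∧ v.2 = 0) ∨ (Cardinal.aleph0 ≤ v.1 ∧ v.2 < (Flim v.1).ord)) ∧
  (∀ a b, le a b → a ∈ t ∧ b ∈ t) ∧
  (∀ v ∈ t, le v v) ∧
  (∀ a b c, le a b → le b c → le a c) ∧
  (∀ a b, le a b → le b a → a = b) ∧
  (∀ a b, le a b → a.1 ≤ b.1) ∧
  (∀ b ∈ t, ∀ κ : Card0, (κ = 0 ∨ Cardinal.aleph0 ≤ κ) → κ < b.1 →
      ∃! i : Ord0, (κ, i) ∈ t ∧ le (κ, i) b) ∧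
  (∃ M : Finset Vertex, ↑M ⊆ t ∧ ∀ v ∈ t, ∃ m ∈ M, le v m) ∧
  (∀ κ : Card0, IsLimitCard κ → Cardinal.aleph0 < κ → ∀ i i' : Ord0,
      (κ, i) ∈ t → (κ, i') ∈ t →
      ({w | le w (κ, i) ∧ w ≠ (κ, i)} = {w | le w (κ, i') ∧ w ≠ (κ, i')}) → i = i')

/-- p is a condition of the forcing ℙ₀. -/
def IsP0 (F : Card0 → Card0) (p : RawP0) : Prop :=
  IsFlimTree (FlimOf F) p.verts p.le ∧
  (∀ v, v ∉ p.verts → ∀ ζ, p.val v ζ = none) ∧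
  (∀ v ∈ p.verts, ∀ μ : Card0, Cardinal.aleph0 ≤ μ → v.1 = Order.succ μ →
      (∀ ζ ∈ dom0 p v, μ.ord ≤ ζ ∧ ζ < v.1.ord) ∧ SetCardLT (dom0 p v) v.1) ∧
  (∀ v ∈ p.verts, v.1 = Cardinal.aleph0 →
      (∀ ζ ∈ dom0 p v, ζ < Cardinal.aleph0.ord) ∧ (dom0 p v).Finite) ∧
  (∀ v ∈ p.verts, (v.1 = 0 ∨ (IsLimitCard v.1 ∧ Cardinal.aleph0 < v.1)) →
      ∀ ζ, p.val v ζ = none) ∧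
  (∀ v ∈ p.verts, IsLimitCard v.1 → (v.1).IsRegular →
      SetCardLT {ζ : Ord0 | ∃ w, w ∈ p.verts ∧ IsSuccCard w.1 ∧ p.le w v ∧ ζ ∈ dom0 p w} v.1)

/-- t(q) extends t(p) as an F_lim-tree. -/
def treeLe (q p : RawP0) : Prop :=
  p.verts ⊆ q.verts ∧ ∀ a b, p.le a b → q.le a b

/-- The partial order ≤₀ on conditions of ℙ₀. -/
def le0 (q p : RawP0) : Prop :=
  treeLe q p ∧ ∀ v ∈ p.verts, ∀ ζ b, p.val v ζ = some b → q.val v ζ = some b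

/-- The class of conditions of ℙ₀. -/
def P0set (F : Card0 → Card0) : Set RawP0 := {p | IsP0 F p}

/-- Compatibility with common extension in a given subclass S. -/
def Compat0In (S : Set RawP0) (p q : RawP0) : Prop := ∃ r ∈ S, le0 r p ∧ le0 r q

/-- Compatibility in ℙ₀. -/
def Compat0 (F : Card0 → Card0) (p q : RawP0) : Prop := Compat0In (P0set F) p q

/-- The height of p is at most lam. -/
def heightLE (p : RawP0) (lam : Card0) : Prop := ∀ v ∈ p.verts, v.1 ≤ lam

/-- Raw data for conditions in ℙ₁: for each (successor) cardinal a partial 0-1-function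
on pairs (ζ, i). -/
abbrev P1Raw : Type 1 := Card0 → Ord0 × Ord0 → Option Bool

/-- Domain of the column at κ. -/
def dom1 (p : P1Raw) (κ : Card0) : Set (Ord0 × Ord0) := {x | p κ x ≠ none}

/-- Support of a condition of ℙ₁. -/
def supp1 (p : P1Raw) : Set Card0 := {κ | ∃ x, p κ x ≠ none}

/-- Succ′: successor cardinals κ⁺ with F(κ⁺) > F(ν⁺) for all successor cardinals ν⁺ < κ⁺. -/
def SuccPrime (F : Card0 → Card0) (κ : Card0) : Prop :=
  IsSuccCard κ ∧ ∀ ν, IsSuccCard ν → ν < κ → F ν < F κ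

/-- p is a condition of the forcing ℙ₁. -/
def IsP1 (F : Card0 → Card0) (p : P1Raw) : Prop :=
  (supp1 p).Finite ∧
  (∀ κ ∈ supp1 p, SuccPrime F κ) ∧
  (∀ κ ∈ supp1 p, ∀ μ : Card0, Cardinal.aleph0 ≤ μ → κ = Order.succ μ →
    (∀ x ∈ dom1 p κ, μ.ord ≤ x.1 ∧ x.1 < κ.ord ∧ x.2 < (F κ).ord) ∧
    SetCardLT (dom1 p κ) κ ∧
    (∀ x y, x ∈ dom1 p κ → y ∈ dom1 p κ → (x.1, y.2) ∈ dom1 p κ))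

/-- The partial order ≤₁ on conditions of ℙ₁ (reverse inclusion). -/
def le1 (q p : P1Raw) : Prop := ∀ κ x b, p κ x = some b → q κ x = some b

/-- The class of conditions of ℙ₁. -/
def P1set (F : Card0 → Card0) : Set P1Raw := {p | IsP1 F p}

/-- Compatibility with common extension in a given subclass S. -/
def Compat1In (S : Set P1Raw) (p q : P1Raw) : Prop := ∃ r ∈ S, le1 r p ∧ le1 r q

/-- Compatibility in ℙ₁. -/
def Compat1 (F : Card0 → Card0) (p q : P1Raw) : Prop := Compat1In (P1set F) p q

/-- The restriction p↾{(κ̄₀,ī₀),…}: keep, in each column κ̄_l, only the entries with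
second coordinate ī_l. -/
def restr1 (S : Set (Card0 × Ord0)) (p : P1Raw) : P1Raw :=
  fun κ x => if (κ, x.2) ∈ S then p κ x else none

/-- The group A₁ of partial ℙ₁-automorphisms. An element is determined, for each
κ⁺ in its finite support, by: a finite set supp π(κ⁺) of indices with a bijection
f_π(κ⁺) of it; a rectangular domain dom_x π(κ⁺) × dom_y π(κ⁺) of size < κ⁺;
flip values π(κ⁺)(ζ,i) ∈ 2 vanishing outside the domain; and for every
ζ ∈ dom_x π(κ⁺) a bijection π(κ⁺)(ζ) of 2^{supp π(κ⁺)}. -/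
structure A1 (F : Card0 → Card0) : Type 1 where
  supp : Set Card0
  suppY : Card0 → Set Ord0
  f : Card0 → Ord0 → Ord0
  domX : Card0 → Set Ord0
  domY : Card0 → Set Ord0
  flip : Card0 → Ord0 × Ord0 → Bool
  colmap : Card0 → Ord0 → (Ord0 → Bool) → (Ord0 → Bool)
  hsuppfin : supp.Finite
  hsupp : ∀ κ ∈ supp, SuccPrime F κ
  hYfin : ∀ κ, (suppY κ).Finite
  hY : ∀ κ ∈ supp, suppY κ ⊆ domY κ ∧ ∀ i ∈ suppY κ, i < (F κ).ord
  hf : ∀ κ, Set.BijOn (f κ) (suppY κ) (suppY κ) ∧ ∀ i ∉ suppY κ, f κ i = i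
  hdom : ∀ κ ∈ supp, ∀ μ : Card0, Cardinal.aleph0 ≤ μ → κ = Order.succ μ →
    (∀ ζ ∈ domX κ, μ.ord ≤ ζ ∧ ζ < κ.ord) ∧ (∀ i ∈ domY κ, i < (F κ).ord) ∧
    SetCardLT (domX κ ×ˢ domY κ) κ
  hflip : ∀ κ x, flip κ x = true → κ ∈ supp ∧ x.1 ∈ domX κ ∧ x.2 ∈ domY κ
  hcol1 : ∀ κ ζ g i, i ∉ suppY κ → colmap κ ζ g i = g i
  hcol2 : ∀ κ ζ g g', (∀ i ∈ suppY κ, g i = g' i) → ∀ i ∈ suppY κ, colmap κ ζ g i = colmap κ ζ g' i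
  hcol3 : ∀ κ ζ, Function.Bijective (colmap κ ζ)
  htriv : ∀ κ ∉ supp, suppY κ = ∅ ∧ domX κ = ∅ ∧ domY κ = ∅

/-- The dense domain D_π of a partial automorphism π ∈ A₁. -/
def A1.Dset {F : Card0 → Card0} (a : A1 F) : Set P1Raw :=
  {p | IsP1 F p ∧ ∀ κ, κ ∈ supp1 p → κ ∈ a.supp → a.domX κ ×ˢ a.domY κ ⊆ dom1 p κ}

/-- The action of π ∈ A₁ on conditions in its domain D_π. -/
def A1.act {F : Card0 → Card0} (a : A1 F) (p : P1Raw) : P1Raw := fun κ x =>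
  if κ ∈ a.supp then
    if x.2 ∈ a.suppY κ then
      if x.1 ∈ a.domX κ then
        (p κ x).map (fun _ => a.colmap κ x.1 (fun j => (p κ (x.1, j)).getD false) x.2)
      else p κ (x.1, a.f κ x.2)
    else if a.flip κ x then (p κ x).map (fun b => !b) else p κ x
  else p κ x

/-- The flip function: flip exactly where p and q are both defined and disagree. -/
def flipFun (p q : P1Raw) : Card0 → Ord0 × Ord0 → Bool :=
  fun κ x => if x ∈ dom1 p κ ∧ x ∈ dom1 q κ ∧ p κ x ≠ q κ x then true else false

lemma flipFun_true {p q : P1Raw} {κ : Card0} {x : Ord0 × Ord0}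
    (h : flipFun p q κ x = true) :
    x ∈ dom1 p κ ∧ x ∈ dom1 q κ ∧ p κ x ≠ q κ x := by
  by_cases hc : x ∈ dom1 p κ ∧ x ∈ dom1 q κ ∧ p κ x ≠ q κ x
  · exact hc
  · simp [flipFun, hc] at h

lemma flipFun_false {p q : P1Raw} {κ : Card0} {x : Ord0 × Ord0}
    (h : flipFun p q κ x = false) (h1 : x ∈ dom1 p κ) (h2 : x ∈ dom1 q κ) :
    p κ x = q κ x := by
  by_cases hc : p κ x = q κ x
  · exact hc
  · simp [flipFun, h1, h2, hc] at h

/-- The partial automorphism that acts only by flipping values where p, q disagree. -/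
def mkFlipAuto (F : Card0 → Card0) (p q : P1Raw) (hp : IsP1 F p) (hq : IsP1 F q) :
    A1 F where
  supp := supp1 p ∩ supp1 q
  suppY _ := ∅
  f _ i := i
  domX κ := Prod.fst '' (dom1 p κ ∩ dom1 q κ)
  domY κ := Prod.snd '' (dom1 p κ ∩ dom1 q κ)
  flip := flipFun p q
  colmap _ _ g := g
  hsuppfin := hp.1.inter_of_left _
  hsupp κ hκ := hp.2.1 κ hκ.1
  hYfin _ := Set.finite_empty
  hY κ _ := ⟨Set.empty_subset _, fun i hi => absurd hi (Set.notMem_empty i)⟩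
  hf κ := ⟨Set.bijOn_empty _, fun _ _ => rfl⟩
  hdom κ hκ μ hμ hκμ := by
    obtain ⟨hb, hc, hrect⟩ := hp.2.2 κ hκ.1 μ hμ hκμ
    refine ⟨?_, ?_, ?_⟩
    · rintro ζ ⟨x, hx, rfl⟩
      exact ⟨(hb x hx.1).1, (hb x hx.1).2.1⟩
    · rintro i ⟨x, hx, rfl⟩
      exact (hb x hx.1).2.2
    · have hsub : (Prod.fst '' (dom1 p κ ∩ dom1 q κ)) ×ˢ
          (Prod.snd '' (dom1 p κ ∩ dom1 q κ)) ⊆ dom1 p κ := by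
        rintro ⟨ζ, i⟩ ⟨⟨x, hx, rfl⟩, ⟨y, hy, rfl⟩⟩
        exact hrect x y hx.1 hy.1
      exact lt_of_le_of_lt (Cardinal.mk_le_mk_of_subset hsub) hc
  hflip κ x h := by
    obtain ⟨h1, h2, _⟩ := flipFun_true h
    exact ⟨⟨⟨x, h1⟩, ⟨x, h2⟩⟩, ⟨x, ⟨h1, h2⟩, rfl⟩, ⟨x, ⟨h1, h2⟩, rfl⟩⟩
  hcol1 _ _ _ _ _ := rfl
  hcol2 _ _ _ _ _ i hi := absurd hi (Set.notMem_empty i)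
  hcol3 _ _ := Function.bijective_id
  htriv κ hκ := by
    refine ⟨rfl, ?_, ?_⟩ <;>
    · rw [Set.image_eq_empty, Set.eq_empty_iff_forall_notMem]
      rintro x ⟨h1, h2⟩
      exact hκ ⟨⟨x, h1⟩, ⟨x, h2⟩⟩

lemma mkFlipAuto_act (F : Card0 → Card0) (p q : P1Raw) (hp : IsP1 F p) (hq : IsP1 F q)
    (κ : Card0) (x : Ord0 × Ord0) :
    (mkFlipAuto F p q hp hq).act p κ x =
      if flipFun p q κ x then (p κ x).map (fun b => !b) else p κ x := by
  by_cases hκ : κ ∈ supp1 p ∩ supp1 q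
  · simp [A1.act, mkFlipAuto, hκ]; congr
  · have hfl : flipFun p q κ x = false := by
      cases hf : flipFun p q κ x
      · rfl
      · obtain ⟨h1, h2, _⟩ := flipFun_true hf
        exact absurd ⟨⟨x, h1⟩, ⟨x, h2⟩⟩ hκ
    simp [A1.act, mkFlipAuto, hκ, hfl]

lemma mkFlipAuto_act_none (F : Card0 → Card0) (p q : P1Raw) (hp : IsP1 F p) (hq : IsP1 F q)
    (κ : Card0) (x : Ord0 × Ord0) :
    (mkFlipAuto F p q hp hq).act p κ x = none ↔ p κ x = none := by
  rw [mkFlipAuto_act]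
  cases hf : flipFun p q κ x <;> simp

lemma mkFlipAuto_agree (F : Card0 → Card0) (p q : P1Raw) (hp : IsP1 F p) (hq : IsP1 F q)
    {κ : Card0} {x : Ord0 × Ord0} (h1 : x ∈ dom1 p κ) (h2 : x ∈ dom1 q κ) :
    (mkFlipAuto F p q hp hq).act p κ x = q κ x := by
  rw [mkFlipAuto_act]
  have h1' : p κ x ≠ none := h1
  have h2' : q κ x ≠ none := h2
  obtain ⟨b, hb⟩ := Option.ne_none_iff_exists'.1 h1'
  obtain ⟨b', hb'⟩ := Option.ne_none_iff_exists'.1 h2'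
  cases hf : flipFun p q κ x
  · rw [flipFun_false hf h1 h2]
    simp
  · obtain ⟨_, _, hne⟩ := flipFun_true hf
    rw [hb, hb'] at hne ⊢
    simp only [Option.map_some]
    cases b <;> cases b' <;> simp_all

/-- For any two conditions p, q ∈ ℙ₁ there is π ∈ A₁ with
p, q ∈ D_π and πp ∥ q, where π acts only by flipping values
(supp π(κ⁺) = ∅ for every κ⁺). -/
theorem statement7 (F : Card0 → Card0)
    (hF : ∀ κ, Cardinal.aleph0 ≤ κ → Order.succ (Order.succ κ) ≤ F κ)
    (hFmono : ∀ κ lam, Cardinal.aleph0 ≤ κ → κ ≤ lam → F κ ≤ F lam)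
    (p q : P1Raw) (hp : IsP1 F p) (hq : IsP1 F q) :
    ∃ a : A1 F, p ∈ a.Dset ∧ q ∈ a.Dset ∧ Compat1 F (a.act p) q ∧
      ∀ κ, a.suppY κ = ∅ := by
  classical
  refine ⟨mkFlipAuto F p q hp hq, ?_, ?_, ?_, fun κ => rfl⟩
  · -- p ∈ Dset
    refine ⟨hp, fun κ hκp hκa => ?_⟩
    obtain ⟨⟨μ, hμ, hκμ⟩, _⟩ := hp.2.1 κ hκp
    have hrect := (hp.2.2 κ hκp μ hμ hκμ).2.2
    intro z hz
    simp only [mkFlipAuto, Set.mem_prod, Set.mem_image] at hz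
    obtain ⟨⟨x, hx, hx1⟩, ⟨y, hy, hy2⟩⟩ := hz
    have := hrect x y hx.1 hy.1
    rwa [hx1, hy2] at this
  · -- q ∈ Dset
    refine ⟨hq, fun κ hκq hκa => ?_⟩
    obtain ⟨⟨μ, hμ, hκμ⟩, _⟩ := hq.2.1 κ hκq
    have hrect := (hq.2.2 κ hκq μ hμ hκμ).2.2
    intro z hz
    simp only [mkFlipAuto, Set.mem_prod, Set.mem_image] at hz
    obtain ⟨⟨x, hx, hx1⟩, ⟨y, hy, hy2⟩⟩ := hz
    have := hrect x y hx.2 hy.2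
    rwa [hx1, hy2] at this
  · -- Compatibility
    set p' : P1Raw := (mkFlipAuto F p q hp hq).act p with hp'def
    set DX : Card0 → Set Ord0 := fun κ => Prod.fst '' (dom1 p κ ∪ dom1 q κ) with hDX
    set DY : Card0 → Set Ord0 := fun κ => Prod.snd '' (dom1 p κ ∪ dom1 q κ) with hDY
    set r : P1Raw := fun κ x =>
      if q κ x ≠ none then q κ x
      else if p κ x ≠ none then p' κ x
      else if x.1 ∈ DX κ ∧ x.2 ∈ DY κ then some false else none with hrdef
    have hrne : ∀ κ x, r κ x ≠ none ↔ (x.1 ∈ DX κ ∧ x.2 ∈ DY κ) := by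
      intro κ x
      constructor
      · intro hx
        by_cases hqx : q κ x ≠ none
        · exact ⟨⟨x, Or.inr hqx, rfl⟩, ⟨x, Or.inr hqx, rfl⟩⟩
        by_cases hpx : p κ x ≠ none
        · exact ⟨⟨x, Or.inl hpx, rfl⟩, ⟨x, Or.inl hpx, rfl⟩⟩
        by_cases hxy : x.1 ∈ DX κ ∧ x.2 ∈ DY κ
        · exact hxy
        · exfalso; apply hx; simp [hrdef, not_not.1 hqx, not_not.1 hpx, hxy]
      · intro hxy
        by_cases hqx : q κ x ≠ none
        · simpa [hrdef, hqx] using hqx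
        by_cases hpx : p κ x ≠ none
        · have hp'x : p' κ x ≠ none := by
            rw [hp'def, Ne, mkFlipAuto_act_none]; exact hpx
          simpa [hrdef, not_not.1 hqx, hpx] using hp'x
        · simp [hrdef, not_not.1 hqx, not_not.1 hpx, hxy]
    have hsupp_sub : supp1 r ⊆ supp1 p ∪ supp1 q := by
      rintro κ ⟨x, hx⟩
      obtain ⟨⟨y, hy, _⟩, _⟩ := (hrne κ x).1 hx
      cases hy with
      | inl h => exact Or.inl ⟨y, h⟩
      | inr h => exact Or.inr ⟨y, h⟩
    have hmkp : ∀ κ ∈ supp1 r, ∀ μ : Card0, Cardinal.aleph0 ≤ μ → κ = Order.succ μ →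
        Cardinal.mk ↥(dom1 p κ) < Cardinal.lift.{1} κ := by
      intro κ _ μ hμ hκμ
      by_cases hκp : κ ∈ supp1 p
      · exact (hp.2.2 κ hκp μ hμ hκμ).2.1
      · have hempty : dom1 p κ = ∅ := by
          rw [Set.eq_empty_iff_forall_notMem]
          intro x hx; exact hκp ⟨x, hx⟩
        rw [hempty]
        simp only [Cardinal.mk_emptyCollection]
        have : Cardinal.aleph0 ≤ Cardinal.lift.{1} κ := by
          rw [Cardinal.aleph0_le_lift, hκμ]
          exact hμ.trans (Order.le_succ μ)
        exact lt_of_lt_of_le Cardinal.aleph0_pos this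
    have hmkq : ∀ κ ∈ supp1 r, ∀ μ : Card0, Cardinal.aleph0 ≤ μ → κ = Order.succ μ →
        Cardinal.mk ↥(dom1 q κ) < Cardinal.lift.{1} κ := by
      intro κ _ μ hμ hκμ
      by_cases hκq : κ ∈ supp1 q
      · exact (hq.2.2 κ hκq μ hμ hκμ).2.1
      · have hempty : dom1 q κ = ∅ := by
          rw [Set.eq_empty_iff_forall_notMem]
          intro x hx; exact hκq ⟨x, hx⟩
        rw [hempty]
        simp only [Cardinal.mk_emptyCollection]
        have : Cardinal.aleph0 ≤ Cardinal.lift.{1} κ := by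
          rw [Cardinal.aleph0_le_lift, hκμ]
          exact hμ.trans (Order.le_succ μ)
        exact lt_of_lt_of_le Cardinal.aleph0_pos this
    refine ⟨r, ⟨?_, ?_, ?_⟩, ?_, ?_⟩
    · -- supp1 r finite
      exact (hp.1.union hq.1).subset hsupp_sub
    · -- SuccPrime
      intro κ hκ
      cases hsupp_sub hκ with
      | inl h => exact hp.2.1 κ h
      | inr h => exact hq.2.1 κ h
    · -- the μ-clause for r
      intro κ hκ μ hμ hκμ
      have hlift : Cardinal.aleph0 ≤ Cardinal.lift.{1} κ := by
        rw [Cardinal.aleph0_le_lift, hκμ]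
        exact hμ.trans (Order.le_succ μ)
      refine ⟨?_, ?_, ?_⟩
      · -- bounds
        intro x hx
        obtain ⟨hx1, hx2⟩ := (hrne κ x).1 hx
        obtain ⟨y, hy, hy1⟩ := hx1
        obtain ⟨z, hz, hz2⟩ := hx2
        have hb1 : μ.ord ≤ y.1 ∧ y.1 < κ.ord := by
          cases hy with
          | inl h =>
            have := (hp.2.2 κ ⟨y, h⟩ μ hμ hκμ).1 y h
            exact ⟨this.1, this.2.1⟩
          | inr h =>
            have := (hq.2.2 κ ⟨y, h⟩ μ hμ hκμ).1 y h
            exact ⟨this.1, this.2.1⟩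
        have hb2 : z.2 < (F κ).ord := by
          cases hz with
          | inl h => exact ((hp.2.2 κ ⟨z, h⟩ μ hμ hκμ).1 z h).2.2
          | inr h => exact ((hq.2.2 κ ⟨z, h⟩ μ hμ hκμ).1 z h).2.2
        rw [← hy1, ← hz2] at *
        exact ⟨hb1.1, hb1.2, hb2⟩
      · -- cardinality
        have hdomeq : dom1 r κ = DX κ ×ˢ DY κ := by
          ext x
          exact hrne κ x
        rw [SetCardLT, hdomeq]
        have hXle : Cardinal.mk ↥(DX κ) < Cardinal.lift.{1} κ := by
          refine lt_of_le_of_lt (le_trans Cardinal.mk_image_le (Cardinal.mk_union_le _ _)) ?_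
          exact Cardinal.add_lt_of_lt hlift (hmkp κ hκ μ hμ hκμ) (hmkq κ hκ μ hμ hκμ)
        have hYle : Cardinal.mk ↥(DY κ) < Cardinal.lift.{1} κ := by
          refine lt_of_le_of_lt (le_trans Cardinal.mk_image_le (Cardinal.mk_union_le _ _)) ?_
          exact Cardinal.add_lt_of_lt hlift (hmkp κ hκ μ hμ hκμ) (hmkq κ hκ μ hμ hκμ)
        have hprod : Cardinal.mk ↥(DX κ ×ˢ DY κ) =
            Cardinal.mk ↥(DX κ) * Cardinal.mk ↥(DY κ) := by
          rw [Cardinal.mk_congr (Equiv.Set.prod _ _), Cardinal.mk_prod,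
            Cardinal.lift_id, Cardinal.lift_id]
        rw [hprod]
        exact Cardinal.mul_lt_of_lt hlift hXle hYle
      · -- rectangularity
        intro x y hx hy
        obtain ⟨hx1, _⟩ := (hrne κ x).1 hx
        obtain ⟨_, hy2⟩ := (hrne κ y).1 hy
        exact (hrne κ (x.1, y.2)).2 ⟨hx1, hy2⟩
    · -- le1 r p'
      intro κ x b hb
      have hpx : p κ x ≠ none := by
        intro h
        rw [hp'def] at hb
        rw [(mkFlipAuto_act_none F p q hp hq κ x).2 h] at hb
        exact absurd hb.symm (Option.some_ne_none b)
      by_cases hqx : q κ x ≠ none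
      · have hagree : p' κ x = q κ x := by
          rw [hp'def]
          exact mkFlipAuto_agree F p q hp hq hpx hqx
        rw [hagree] at hb
        simpa [hrdef, hqx, hagree] using hb
      · simpa [hrdef, not_not.1 hqx, hpx] using hb
    · -- le1 r q
      intro κ x b hb
      have hqx : q κ x ≠ none := by rw [hb]; exact Option.some_ne_none b
      simpa [hrdef, hqx] using hb
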